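/- Let A and B be real random variables on a probability space with B > 0 almost surely, satisfying E[exp(λA − λ²B²/2)] ≤ 1 for all λ ∈ ℝ, and assume 0 < E[B] < ∞. Then E[ exp( A² / (4(B² + (E B)²)) ) ] ≤ √2, and for every real x > 0, E[ exp( xA / √(B² + (E B)²) ) ] ≤ √2 · exp(x²). -/

import Mathlib

set_option maxHeartbeats 1000000

open MeasureTheory Real

lemma my_integrable_rexp_quadratic {b : ℝ} (hb : b < 0) (c : ℝ) :
    Integrable (fun x : ℝ => Real.exp (b * x ^ 2 + c * x)) := by
  have h := (integrable_cexp_quadratic' (b := (b:ℂ)) (by simpa using hb) (c:ℂ) 0).norm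
  refine h.congr (Filter.Eventually.of_forall fun x => ?_)
  have h1 : ((b:ℂ) * (x:ℂ) ^ 2 + (c:ℂ) * (x:ℂ) + 0) = ((b * x ^ 2 + c * x : ℝ) : ℂ) := by
    push_cast; ring
  simp only [Complex.norm_exp, h1, Complex.ofReal_re]

lemma my_integral_rexp_quadratic {b : ℝ} (hb : b < 0) (c : ℝ) :
    ∫ x : ℝ, Real.exp (b * x ^ 2 + c * x)
      = Real.sqrt (π / (-b)) * Real.exp (- c ^ 2 / (4 * b)) := by
  have h := integral_cexp_quadratic (b := (b:ℂ)) (by simpa using hb) (c:ℂ) 0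
  have h2 : ∫ x : ℝ, Complex.exp ((b:ℂ) * (x:ℂ) ^ 2 + (c:ℂ) * (x:ℂ) + 0)
      = ((∫ x : ℝ, Real.exp (b * x ^ 2 + c * x) : ℝ) : ℂ) := by
    have h1 : ∀ x : ℝ, ((b:ℂ) * (x:ℂ) ^ 2 + (c:ℂ) * (x:ℂ) + 0) = ((b * x ^ 2 + c * x : ℝ) : ℂ) := by
      intro x; push_cast; ring
    simp_rw [h1, ← Complex.ofReal_exp]
    exact integral_ofReal
  rw [h2] at h
  have hb' : 0 < -b := neg_pos.mpr hb
  have hrhs : ((π : ℂ) / -(b:ℂ)) ^ (1 / 2 : ℂ) * Complex.exp (0 - (c:ℂ)^2 / (4 * (b:ℂ)))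
      = ((Real.sqrt (π / (-b)) * Real.exp (- c ^ 2 / (4 * b)) : ℝ) : ℂ) := by
    have hpos : (0:ℝ) ≤ π / (-b) := by positivity
    rw [Real.sqrt_eq_rpow]
    push_cast [Complex.ofReal_cpow hpos, Complex.ofReal_exp]
    ring_nf
  rw [hrhs] at h
  exact_mod_cast h

/-- The weighted Gaussian integral evaluation. -/
lemma my_gauss_eval {a b cc : ℝ} (hc : 0 < cc) :
    ∫ l : ℝ, cc / Real.sqrt (2 * π) * Real.exp (-((b ^ 2 + cc ^ 2) / 2) * l ^ 2 + a * l)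
      = cc / Real.sqrt (b ^ 2 + cc ^ 2) * Real.exp (a ^ 2 / (2 * (b ^ 2 + cc ^ 2))) := by
  have hr : 0 < b ^ 2 + cc ^ 2 := by positivity
  have hb2 : -((b ^ 2 + cc ^ 2) / 2) < 0 := by linarith
  rw [integral_const_mul _ _, my_integral_rexp_quadratic hb2 a]
  have e1 : π / -(-((b ^ 2 + cc ^ 2) / 2)) = 2 * π / (b ^ 2 + cc ^ 2) := by
    rw [neg_neg]; field_simp
  have e2 : -a ^ 2 / (4 * -((b ^ 2 + cc ^ 2) / 2)) = a ^ 2 / (2 * (b ^ 2 + cc ^ 2)) := by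
    rw [show (4:ℝ) * -((b ^ 2 + cc ^ 2) / 2) = -(2 * (b ^ 2 + cc ^ 2)) by ring, neg_div_neg_eq]
  rw [e1, e2, Real.sqrt_div (by positivity : (0:ℝ) ≤ 2 * π)]
  have hπ : (0:ℝ) < Real.sqrt (2 * π) := Real.sqrt_pos.mpr (by positivity)
  have hsr : (0:ℝ) < Real.sqrt (b ^ 2 + cc ^ 2) := Real.sqrt_pos.mpr hr
  field_simp

/-- Theorem 2.1, the bounds `E exp(A²/[4(B²+(EB)²)]) ≤ √2` and (2.2). -/
theorem stmt_1 {Ω : Type*} {mΩ : MeasurableSpace Ω} {μ : Measure Ω}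
    [IsProbabilityMeasure μ]
    (A B : Ω → ℝ) (hA : Measurable A) (hB : Measurable B)
    (hBpos : ∀ᵐ ω ∂μ, 0 < B ω)
    (h14 : ∀ lam : ℝ,
      ∫⁻ ω, ENNReal.ofReal (Real.exp (lam * A ω - lam ^ 2 * (B ω) ^ 2 / 2)) ∂μ ≤ 1)
    (hBint : Integrable B μ) (hEB : 0 < ∫ ω, B ω ∂μ) :
    (∫⁻ ω, ENNReal.ofReal
        (Real.exp ((A ω) ^ 2 / (4 * ((B ω) ^ 2 + (∫ ω', B ω' ∂μ) ^ 2)))) ∂μ ≤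
      ENNReal.ofReal (Real.sqrt 2)) ∧
    ∀ x : ℝ, 0 < x →
      ∫⁻ ω, ENNReal.ofReal
          (Real.exp (x * A ω / Real.sqrt ((B ω) ^ 2 + (∫ ω', B ω' ∂μ) ^ 2))) ∂μ ≤
        ENNReal.ofReal (Real.sqrt 2 * Real.exp (x ^ 2)) := by
  set cc : ℝ := ∫ ω', B ω' ∂μ with hcc
  have hc0 : 0 < cc := hEB
  have hsp : ∀ ω, (0:ℝ) < (B ω) ^ 2 + cc ^ 2 := fun ω => by positivity
  have hπ : (0:ℝ) < Real.sqrt (2 * π) := Real.sqrt_pos.mpr (by positivity)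
  -- the Gaussian weight
  have hφnn : ∀ l : ℝ, 0 ≤ cc / Real.sqrt (2 * π) * Real.exp (-(cc ^ 2 / 2) * l ^ 2) :=
    fun l => by positivity
  -- combining exponentials
  have key : ∀ ω (l : ℝ),
      cc / Real.sqrt (2 * π) * Real.exp (-(((B ω) ^ 2 + cc ^ 2) / 2) * l ^ 2 + A ω * l)
        = (cc / Real.sqrt (2 * π) * Real.exp (-(cc ^ 2 / 2) * l ^ 2))
            * Real.exp (l * A ω - l ^ 2 * (B ω) ^ 2 / 2) := by
    intro ω l
    rw [mul_assoc, ← Real.exp_add]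
    have : -(cc ^ 2 / 2) * l ^ 2 + (l * A ω - l ^ 2 * (B ω) ^ 2 / 2)
        = -(((B ω) ^ 2 + cc ^ 2) / 2) * l ^ 2 + A ω * l := by ring
    rw [this]
  -- pointwise Gaussian identity
  have point : ∀ ω,
      ENNReal.ofReal (cc / Real.sqrt ((B ω) ^ 2 + cc ^ 2)
          * Real.exp ((A ω) ^ 2 / (2 * ((B ω) ^ 2 + cc ^ 2))))
        = ∫⁻ l : ℝ, ENNReal.ofReal ((cc / Real.sqrt (2 * π) * Real.exp (-(cc ^ 2 / 2) * l ^ 2))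
            * Real.exp (l * A ω - l ^ 2 * (B ω) ^ 2 / 2)) := by
    intro ω
    have hb2 : -(((B ω) ^ 2 + cc ^ 2) / 2) < 0 := by have := hsp ω; linarith
    have hint : Integrable (fun l : ℝ =>
        cc / Real.sqrt (2 * π) * Real.exp (-(((B ω) ^ 2 + cc ^ 2) / 2) * l ^ 2 + A ω * l)) :=
      (my_integrable_rexp_quadratic hb2 (A ω)).const_mul _
    calc ENNReal.ofReal (cc / Real.sqrt ((B ω) ^ 2 + cc ^ 2)
            * Real.exp ((A ω) ^ 2 / (2 * ((B ω) ^ 2 + cc ^ 2))))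
        = ENNReal.ofReal (∫ l : ℝ, cc / Real.sqrt (2 * π)
            * Real.exp (-(((B ω) ^ 2 + cc ^ 2) / 2) * l ^ 2 + A ω * l)) := by
          rw [my_gauss_eval hc0]
      _ = ∫⁻ l : ℝ, ENNReal.ofReal (cc / Real.sqrt (2 * π)
            * Real.exp (-(((B ω) ^ 2 + cc ^ 2) / 2) * l ^ 2 + A ω * l)) :=
          ofReal_integral_eq_lintegral_ofReal hint
            (Filter.Eventually.of_forall fun l => by positivity)
      _ = _ := by simp_rw [key ω]
  -- Fubini measurability
  have meas : Measurable (Function.uncurry fun (ω : Ω) (l : ℝ) =>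
      ENNReal.ofReal ((cc / Real.sqrt (2 * π) * Real.exp (-(cc ^ 2 / 2) * l ^ 2))
        * Real.exp (l * A ω - l ^ 2 * (B ω) ^ 2 / 2))) := by
    apply Measurable.ennreal_ofReal
    apply Measurable.mul
    · exact (((measurable_snd.pow_const 2).const_mul (-(cc ^ 2 / 2))).exp).const_mul _
    · apply Measurable.exp
      apply Measurable.sub
      · exact measurable_snd.mul (hA.comp measurable_fst)
      · exact (((measurable_snd.pow_const 2).mul
          ((hB.comp measurable_fst).pow_const 2)).div_const 2)
  -- Step 1
  have step1 : ∫⁻ ω, ENNReal.ofReal (cc / Real.sqrt ((B ω) ^ 2 + cc ^ 2)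
      * Real.exp ((A ω) ^ 2 / (2 * ((B ω) ^ 2 + cc ^ 2)))) ∂μ ≤ 1 := by
    have hφint : Integrable (fun l : ℝ =>
        cc / Real.sqrt (2 * π) * Real.exp (-(cc ^ 2 / 2) * l ^ 2)) :=
      (integrable_exp_neg_mul_sq (by positivity : (0:ℝ) < cc ^ 2 / 2)).const_mul _
    calc ∫⁻ ω, ENNReal.ofReal (cc / Real.sqrt ((B ω) ^ 2 + cc ^ 2)
            * Real.exp ((A ω) ^ 2 / (2 * ((B ω) ^ 2 + cc ^ 2)))) ∂μ
        = ∫⁻ ω, (∫⁻ l : ℝ, ENNReal.ofReal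
            ((cc / Real.sqrt (2 * π) * Real.exp (-(cc ^ 2 / 2) * l ^ 2))
              * Real.exp (l * A ω - l ^ 2 * (B ω) ^ 2 / 2))) ∂μ :=
          lintegral_congr point
      _ = ∫⁻ l : ℝ, ∫⁻ ω, ENNReal.ofReal
            ((cc / Real.sqrt (2 * π) * Real.exp (-(cc ^ 2 / 2) * l ^ 2))
              * Real.exp (l * A ω - l ^ 2 * (B ω) ^ 2 / 2)) ∂μ :=
          lintegral_lintegral_swap meas.aemeasurable
      _ ≤ ∫⁻ l : ℝ, ENNReal.ofReal
            (cc / Real.sqrt (2 * π) * Real.exp (-(cc ^ 2 / 2) * l ^ 2)) := by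
          refine lintegral_mono fun l => ?_
          have : ∀ ω, ENNReal.ofReal ((cc / Real.sqrt (2 * π)
                  * Real.exp (-(cc ^ 2 / 2) * l ^ 2))
                * Real.exp (l * A ω - l ^ 2 * (B ω) ^ 2 / 2))
              = ENNReal.ofReal (cc / Real.sqrt (2 * π) * Real.exp (-(cc ^ 2 / 2) * l ^ 2))
                * ENNReal.ofReal (Real.exp (l * A ω - l ^ 2 * (B ω) ^ 2 / 2)) :=
            fun ω => ENNReal.ofReal_mul (hφnn l)
          simp_rw [this]
          rw [lintegral_const_mul' _ _ ENNReal.ofReal_ne_top]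
          calc _ ≤ ENNReal.ofReal (cc / Real.sqrt (2 * π)
                * Real.exp (-(cc ^ 2 / 2) * l ^ 2)) * 1 := mul_le_mul_right (h14 l) _
            _ = _ := mul_one _
      _ = 1 := by
          rw [← ofReal_integral_eq_lintegral_ofReal hφint
            (Filter.Eventually.of_forall hφnn), integral_const_mul, integral_gaussian]
          have e1 : π / (cc ^ 2 / 2) = 2 * π / cc ^ 2 := by
            field_simp
          rw [e1, Real.sqrt_div (by positivity : (0:ℝ) ≤ 2 * π), Real.sqrt_sq hc0.le]
          have : cc / Real.sqrt (2 * π) * (Real.sqrt (2 * π) / cc) = 1 := by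
            field_simp
          rw [this, ENNReal.ofReal_one]
  -- Step 2: Cauchy-Schwarz
  have main : ∫⁻ ω, ENNReal.ofReal
      (Real.exp ((A ω) ^ 2 / (4 * ((B ω) ^ 2 + cc ^ 2)))) ∂μ
      ≤ ENNReal.ofReal (Real.sqrt 2) := by
    set f : Ω → ENNReal := fun ω => ENNReal.ofReal
      (Real.sqrt (cc / Real.sqrt ((B ω) ^ 2 + cc ^ 2))
        * Real.exp ((A ω) ^ 2 / (4 * ((B ω) ^ 2 + cc ^ 2)))) with hf
    set g : Ω → ENNReal := fun ω => ENNReal.ofReal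
      (Real.sqrt (Real.sqrt ((B ω) ^ 2 + cc ^ 2) / cc)) with hg
    have hsqpos : ∀ ω, 0 < Real.sqrt ((B ω) ^ 2 + cc ^ 2) :=
      fun ω => Real.sqrt_pos.mpr (hsp ω)
    have hfg : ∀ ω, (f * g) ω = ENNReal.ofReal
        (Real.exp ((A ω) ^ 2 / (4 * ((B ω) ^ 2 + cc ^ 2)))) := by
      intro ω
      rw [Pi.mul_apply, hf, hg, ← ENNReal.ofReal_mul (by positivity)]
      congr 1
      rw [mul_comm, ← mul_assoc, ← Real.sqrt_mul (by positivity)]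
      have : Real.sqrt ((B ω) ^ 2 + cc ^ 2) / cc * (cc / Real.sqrt ((B ω) ^ 2 + cc ^ 2)) = 1 := by
        field_simp
      rw [this, Real.sqrt_one, one_mul]
    have hf2 : ∀ ω, f ω ^ (2:ℝ) = ENNReal.ofReal (cc / Real.sqrt ((B ω) ^ 2 + cc ^ 2)
        * Real.exp ((A ω) ^ 2 / (2 * ((B ω) ^ 2 + cc ^ 2)))) := by
      intro ω
      rw [hf, ENNReal.ofReal_rpow_of_nonneg (by positivity) (by norm_num)]
      congr 1
      rw [Real.rpow_two, mul_pow, Real.sq_sqrt (by positivity), ← Real.exp_nat_mul]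
      congr 1
      have h0 := (hsp ω).ne'
      congr 1
      field_simp
      ring
    have hg2 : ∀ ω, g ω ^ (2:ℝ) = ENNReal.ofReal
        (Real.sqrt ((B ω) ^ 2 + cc ^ 2) / cc) := by
      intro ω
      rw [hg, ENNReal.ofReal_rpow_of_nonneg (by positivity) (by norm_num)]
      congr 1
      rw [Real.rpow_two, Real.sq_sqrt (by positivity)]
    have hfm : AEMeasurable f μ := by
      apply Measurable.aemeasurable
      apply Measurable.ennreal_ofReal
      apply Measurable.mul
      · exact (measurable_const.div ((hB.pow_const 2).add_const _).sqrt).sqrt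
      · exact (((hA.pow_const 2).div
          ((((hB.pow_const 2).add_const _)).const_mul 4))).exp
    have hgm : AEMeasurable g μ := by
      apply Measurable.aemeasurable
      exact (((((hB.pow_const 2).add_const _)).sqrt.div_const cc)).sqrt.ennreal_ofReal
    have holder := ENNReal.lintegral_mul_le_Lp_mul_Lq μ
      Real.HolderConjugate.two_two hfm hgm
    have hg2int : ∫⁻ ω, g ω ^ (2:ℝ) ∂μ ≤ ENNReal.ofReal 2 := by
      calc ∫⁻ ω, g ω ^ (2:ℝ) ∂μ
          = ∫⁻ ω, ENNReal.ofReal (Real.sqrt ((B ω) ^ 2 + cc ^ 2) / cc) ∂μ :=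
            lintegral_congr hg2
        _ ≤ ∫⁻ ω, ENNReal.ofReal ((B ω + cc) / cc) ∂μ := by
            refine lintegral_mono_ae (hBpos.mono fun ω hω => ?_)
            refine ENNReal.ofReal_le_ofReal ?_
            gcongr
            calc Real.sqrt ((B ω) ^ 2 + cc ^ 2) ≤ Real.sqrt ((B ω + cc) ^ 2) :=
                  Real.sqrt_le_sqrt (by nlinarith [hω.le, hc0.le])
              _ = B ω + cc := Real.sqrt_sq (by linarith)
        _ = ENNReal.ofReal 2 := by
            have hint2 : Integrable (fun ω => (B ω + cc) / cc) μ :=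
              (hBint.add (integrable_const cc)).div_const cc
            rw [← ofReal_integral_eq_lintegral_ofReal hint2
              (hBpos.mono fun ω hω => by positivity)]
            congr 1
            rw [integral_div, integral_add hBint (integrable_const cc), integral_const,
              probReal_univ, one_smul, ← hcc]
            field_simp
            ring
    have h1 : (∫⁻ ω, f ω ^ (2:ℝ) ∂μ) ^ (1/(2:ℝ)) ≤ 1 := by
      have : ∫⁻ ω, f ω ^ (2:ℝ) ∂μ ≤ 1 := by
        rw [lintegral_congr hf2]; exact step1
      calc (∫⁻ ω, f ω ^ (2:ℝ) ∂μ) ^ (1/(2:ℝ)) ≤ (1:ENNReal) ^ (1/(2:ℝ)) :=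
            ENNReal.rpow_le_rpow this (by norm_num)
        _ = 1 := ENNReal.one_rpow _
    have h2 : (∫⁻ ω, g ω ^ (2:ℝ) ∂μ) ^ (1/(2:ℝ)) ≤ ENNReal.ofReal (Real.sqrt 2) := by
      calc (∫⁻ ω, g ω ^ (2:ℝ) ∂μ) ^ (1/(2:ℝ))
          ≤ (ENNReal.ofReal 2) ^ (1/(2:ℝ)) := ENNReal.rpow_le_rpow hg2int (by norm_num)
        _ = ENNReal.ofReal (Real.sqrt 2) := by
            rw [ENNReal.ofReal_rpow_of_nonneg (by norm_num) (by norm_num),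
              ← Real.sqrt_eq_rpow]
    calc ∫⁻ ω, ENNReal.ofReal
          (Real.exp ((A ω) ^ 2 / (4 * ((B ω) ^ 2 + cc ^ 2)))) ∂μ
        = ∫⁻ ω, (f * g) ω ∂μ := (lintegral_congr hfg).symm
      _ ≤ (∫⁻ ω, f ω ^ (2:ℝ) ∂μ) ^ (1/(2:ℝ)) * (∫⁻ ω, g ω ^ (2:ℝ) ∂μ) ^ (1/(2:ℝ)) := holder
      _ ≤ 1 * ENNReal.ofReal (Real.sqrt 2) := mul_le_mul' h1 h2
      _ = ENNReal.ofReal (Real.sqrt 2) := one_mul _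
  refine ⟨main, fun x hx => ?_⟩
  have hbound : ∀ ω, x * A ω / Real.sqrt ((B ω) ^ 2 + cc ^ 2)
      ≤ (A ω) ^ 2 / (4 * ((B ω) ^ 2 + cc ^ 2)) + x ^ 2 := by
    intro ω
    have ht : 0 < Real.sqrt ((B ω) ^ 2 + cc ^ 2) := Real.sqrt_pos.mpr (hsp ω)
    have hsq : Real.sqrt ((B ω) ^ 2 + cc ^ 2) ^ 2 = (B ω) ^ 2 + cc ^ 2 :=
      Real.sq_sqrt (hsp ω).le
    have hA2 : (A ω) ^ 2 / (4 * ((B ω) ^ 2 + cc ^ 2))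
        = (A ω / Real.sqrt ((B ω) ^ 2 + cc ^ 2)) ^ 2 / 4 := by
      have h0 : (B ω) ^ 2 + cc ^ 2 ≠ 0 := (hsp ω).ne'
      rw [div_pow, hsq]
      field_simp
    rw [hA2, mul_div_assoc]
    nlinarith [sq_nonneg (A ω / Real.sqrt ((B ω) ^ 2 + cc ^ 2) - 2 * x)]
  calc ∫⁻ ω, ENNReal.ofReal
        (Real.exp (x * A ω / Real.sqrt ((B ω) ^ 2 + cc ^ 2))) ∂μ
      ≤ ∫⁻ ω, ENNReal.ofReal
          (Real.exp ((A ω) ^ 2 / (4 * ((B ω) ^ 2 + cc ^ 2)) + x ^ 2)) ∂μ :=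
        lintegral_mono fun ω =>
          ENNReal.ofReal_le_ofReal (Real.exp_le_exp.mpr (hbound ω))
    _ = ∫⁻ ω, ENNReal.ofReal
          (Real.exp ((A ω) ^ 2 / (4 * ((B ω) ^ 2 + cc ^ 2))))
          * ENNReal.ofReal (Real.exp (x ^ 2)) ∂μ := by
        simp_rw [Real.exp_add, ENNReal.ofReal_mul (Real.exp_nonneg _)]
    _ = (∫⁻ ω, ENNReal.ofReal
          (Real.exp ((A ω) ^ 2 / (4 * ((B ω) ^ 2 + cc ^ 2)))) ∂μ)
          * ENNReal.ofReal (Real.exp (x ^ 2)) :=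
        lintegral_mul_const' _ _ ENNReal.ofReal_ne_top
    _ ≤ ENNReal.ofReal (Real.sqrt 2) * ENNReal.ofReal (Real.exp (x ^ 2)) :=
        mul_le_mul_left main _
    _ = ENNReal.ofReal (Real.sqrt 2 * Real.exp (x ^ 2)) :=
        (ENNReal.ofReal_mul (Real.sqrt_nonneg 2)).symm
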